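/- Let a, b, c > 0 and set a* := a, b* := √(2/3) s_* b, c* := (2/3) s_*² c. Let Q₀ := √(3/2)( e₃⊗e₃ − (1/3)Id ) ∈ S₀, and for p₁, p₂, p₃ ∈ ℝ let P ∈ S₀ be the matrix with rows (p₁, p₂, 0), (p₂, p₃, 0), (0, 0, −p₁−p₃). Then tr(P Q₀) = −√(3/2)(p₁ + p₃), and −a*|P|² − 2 b* tr(Q₀ P²) + 2 c* (tr(Q₀ P))² + c*|P|² ≥ (c* − a*)|P|², where c* − a* = (b² + b√(b² + 24ac))/(12c) > 0. (The left-hand side is the second derivative at t = 0 of t ↦ f*(Q₀ + tP); P is a generic normal vector to the vacuum manifold at Q₀.) -/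

import Mathlib

open Matrix

noncomputable section

abbrev M3 : Type := Matrix (Fin 3) (Fin 3) ℝ

def frob (Q : M3) : ℝ := Real.sqrt (∑ i, ∑ j, (Q i j) ^ 2)

def sstar (a b c : ℝ) : ℝ := (b + Real.sqrt (b ^ 2 + 24 * a * c)) / (4 * c)

def bstar (a b c : ℝ) : ℝ := Real.sqrt (2/3) * sstar a b c * b

def cstar (a b c : ℝ) : ℝ := (2/3) * (sstar a b c) ^ 2 * c

/-- The vector e₃ = (0,0,1). -/
def e3v : Fin 3 → ℝ := ![0, 0, 1]

/-- Q₀ = √(3/2)( e₃⊗e₃ − (1/3)Id ). -/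
def Q0 : M3 := Real.sqrt (3/2) • (vecMulVec e3v e3v - (1/3 : ℝ) • (1 : M3))

/-- The generic normal matrix P with rows (p₁,p₂,0), (p₂,p₃,0), (0,0,−p₁−p₃). -/
def Pmat (p1 p2 p3 : ℝ) : M3 := !![p1, p2, 0; p2, p3, 0; 0, 0, -p1-p3]

lemma hQ0 : Q0 = Real.sqrt (3/2) • !![(-1/3 : ℝ),0,0;0,-1/3,0;0,0,2/3] := by
  ext i j
  fin_cases i <;> fin_cases j <;>
    simp [Q0, vecMulVec_apply, e3v, Matrix.one_apply, vecHead, vecTail] <;> norm_num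

lemma trPQ0 (p1 p2 p3 : ℝ) :
    (Pmat p1 p2 p3 * Q0).trace = -Real.sqrt (3/2) * (p1 + p3) := by
  rw [hQ0]
  simp [Matrix.trace, Matrix.mul_apply, Fin.sum_univ_three, Pmat, Matrix.smul_apply]
  ring

lemma trQ0P (p1 p2 p3 : ℝ) :
    (Q0 * Pmat p1 p2 p3).trace = -Real.sqrt (3/2) * (p1 + p3) := by
  rw [hQ0]
  simp [Matrix.trace, Matrix.mul_apply, Fin.sum_univ_three, Pmat, Matrix.smul_apply]
  ring

lemma trQ0PP (p1 p2 p3 : ℝ) :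
    (Q0 * (Pmat p1 p2 p3 * Pmat p1 p2 p3)).trace =
      Real.sqrt (3/2) * ((2/3)*(p1+p3)^2 - (p1^2+2*p2^2+p3^2)/3) := by
  rw [hQ0]
  simp [Matrix.trace, Matrix.mul_apply, Fin.sum_univ_three, Pmat, Matrix.smul_apply]
  ring

lemma frobP (p1 p2 p3 : ℝ) :
    frob (Pmat p1 p2 p3) ^ 2 = p1^2 + 2*p2^2 + p3^2 + (p1+p3)^2 := by
  rw [frob, Real.sq_sqrt (by positivity)]
  simp [Fin.sum_univ_three, Pmat]
  ring

/-- With a* = a, b* = √(2/3)s_* b, c* = (2/3)s_*² c: tr(P Q₀) = −√(3/2)(p₁+p₃),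
−a*|P|² − 2b* tr(Q₀P²) + 2c*(tr(Q₀P))² + c*|P|² ≥ (c*−a*)|P|², and
c* − a* = (b² + b√(b² + 24ac))/(12c) > 0. -/
theorem stmt6 (a b c : ℝ) (ha : 0 < a) (hb : 0 < b) (hc : 0 < c) (p1 p2 p3 : ℝ) :
    (Pmat p1 p2 p3 * Q0).trace = -Real.sqrt (3/2) * (p1 + p3) ∧
    (cstar a b c - a) * frob (Pmat p1 p2 p3) ^ 2 ≤
      -a * frob (Pmat p1 p2 p3) ^ 2
        - 2 * bstar a b c * (Q0 * (Pmat p1 p2 p3 * Pmat p1 p2 p3)).trace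
        + 2 * cstar a b c * ((Q0 * Pmat p1 p2 p3).trace) ^ 2
        + cstar a b c * frob (Pmat p1 p2 p3) ^ 2 ∧
    cstar a b c - a = (b ^ 2 + b * Real.sqrt (b ^ 2 + 24 * a * c)) / (12 * c) ∧
    0 < cstar a b c - a := by
  set r : ℝ := Real.sqrt (b ^ 2 + 24 * a * c) with hrdef
  have hr0 : 0 ≤ r := Real.sqrt_nonneg _
  have hr2 : r ^ 2 = b ^ 2 + 24 * a * c := Real.sq_sqrt (by positivity)
  set s : ℝ := sstar a b c with hsdef
  have hs : s = (b + r) / (4 * c) := rfl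
  have hspos : 0 < s := by
    rw [hs]; positivity
  have hkey : 2 * c * s ^ 2 = b * s + 3 * a := by
    rw [hs]; field_simp; linear_combination 2 * hr2
  have ht2 : Real.sqrt (3/2) ^ 2 = 3/2 := Real.sq_sqrt (by norm_num)
  have hu : Real.sqrt (2/3) * Real.sqrt (3/2) = 1 := by
    rw [← Real.sqrt_mul (by norm_num)]; norm_num
  refine ⟨trPQ0 p1 p2 p3, ?_, ?_, ?_⟩
  · rw [trQ0P, trQ0PP, frobP]
    have hbt : bstar a b c * Real.sqrt (3/2) = s * b := by
      rw [bstar, ← hsdef]; linear_combination (s * b) * hu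
    have hcs : cstar a b c = (2/3) * s ^ 2 * c := rfl
    have e1 : 2 * bstar a b c *
        (Real.sqrt (3/2) * ((2/3)*(p1+p3)^2 - (p1^2+2*p2^2+p3^2)/3)) =
        2 * (s * b) * ((2/3)*(p1+p3)^2 - (p1^2+2*p2^2+p3^2)/3) := by
      linear_combination (2 * ((2/3)*(p1+p3)^2 - (p1^2+2*p2^2+p3^2)/3)) * hbt
    have e2 : (-Real.sqrt (3/2) * (p1 + p3)) ^ 2 = (3/2) * (p1+p3)^2 := by
      linear_combination ((p1+p3)^2) * ht2
    rw [e2, hcs]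
    nlinarith [mul_nonneg (mul_nonneg hb.le hspos.le) (sq_nonneg (p1 - p3)),
      mul_nonneg (mul_nonneg hb.le hspos.le) (sq_nonneg p2),
      mul_nonneg ha.le (sq_nonneg (p1 + p3)), hkey, e1, hbt]
  · rw [cstar, ← hsdef, hs]; field_simp; linear_combination 24 * hr2
  · have : cstar a b c - a = (b ^ 2 + b * r) / (12 * c) := by
      rw [cstar, ← hsdef, hs]; field_simp; linear_combination 24 * hr2
    rw [this]; positivity
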